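/- arXiv:1109.0191 — 3 statements merged into one kernel-verified Lean document; each statement's English description precedes it below -/
import Mathlib

section
/- Let a, b, c ≥ 2 be pairwise coprime, n = a*b + a*c + b*c, g ∈ Equiv.Perm (Fin n) with g.cycleType = {a*b, a*c, b*c}, and P = P(⟨g⟩). Let p, q ∈ Fin n lie in the same ⟨g⟩-orbit, i.e. q = g^m p for some m ∈ ℕ. Then the set {v ∈ P | v p q = 0} (the points of P whose matrix entry at position (p, q) vanishes) is a facet of P. -/
/-- The permutation polytope of a subgroup `G` of permutations of `Fin n`:
the convex hull of the permutation matrices of elements of `G`. -/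
noncomputable def permPolytope (n : ℕ) (G : Subgroup (Equiv.Perm (Fin n))) :
    Set (Matrix (Fin n) (Fin n) ℝ) :=
  convexHull ℝ {M : Matrix (Fin n) (Fin n) ℝ | ∃ σ ∈ G, M = σ.permMatrix ℝ}

/-- A facet of a polytope `P` is a nonempty proper exposed face of dimension
`dim P - 1`. -/
def IsFacetOf {n : ℕ} (P F : Set (Matrix (Fin n) (Fin n) ℝ)) : Prop :=
  IsExposed ℝ P F ∧ F.Nonempty ∧ F ≠ P ∧
    Module.finrank ℝ (vectorSpan ℝ F) = Module.finrank ℝ (vectorSpan ℝ P) - 1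

private lemma permMatrix_entry {n : ℕ} (σ : Equiv.Perm (Fin n)) (i j : Fin n) :
    σ.permMatrix ℝ i j = if σ i = j then 1 else 0 := by
  simp [Equiv.Perm.permMatrix, PEquiv.toMatrix_apply, Equiv.toPEquiv_apply, Option.mem_def,
    eq_comm]

private lemma sum_two_ind (X A B : ℕ) (hA : A < X) (hB : B < X) (hAB : A ≠ B) (u v : ℝ) :
    ∑ α ∈ Finset.range X, (if α = A then u else if α = B then v else 0) = u + v := by
  have h : ∀ α ∈ Finset.range X, (if α = A then u else if α = B then v else 0) =
      (if α = A then u else 0) + (if α = B then v else 0) := by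
    intro α _
    by_cases h1 : α = A
    · subst h1; simp [hAB]
    · by_cases h2 : α = B <;> simp [h1, h2, Ne.symm hAB]
  rw [Finset.sum_congr rfl h, Finset.sum_add_distrib, Finset.sum_ite_eq' _ A (fun _ => u),
    Finset.sum_ite_eq' _ B (fun _ => v)]
  simp [Finset.mem_range.mpr hA, Finset.mem_range.mpr hB]

private lemma sum_class_mod (L M : ℕ) (hL : 0 < L) (hM : 0 < M) (hLM : Nat.Coprime L M)
    (r : ℕ) (φ : ℕ → ℝ) :
    ∑ t ∈ (Finset.range (L * M)).filter (fun t => t % L = r % L), φ (t % M)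
      = ∑ u ∈ Finset.range M, φ u := by
  have himg : (Finset.range (L * M)).filter (fun t => t % L = r % L)
      = (Finset.range M).image (fun s => r % L + L * s) := by
    ext t
    simp only [Finset.mem_filter, Finset.mem_range, Finset.mem_image]
    constructor
    · rintro ⟨htN, htr⟩
      refine ⟨t / L, ?_, ?_⟩
      · rw [Nat.div_lt_iff_lt_mul hL]; simpa [mul_comm] using htN
      · rw [← htr]; exact Nat.mod_add_div t L
    · rintro ⟨s, hs, rfl⟩
      constructor
      · have h1 : r % L < L := Nat.mod_lt _ hL
        have h2 : L * s ≤ L * (M - 1) := Nat.mul_le_mul_left _ (by omega)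
        have : L * (M - 1) + L = L * M := by
          have : M - 1 + 1 = M := by omega
          calc L * (M - 1) + L = L * (M - 1 + 1) := by ring
            _ = L * M := by rw [this]
        omega
      · rw [Nat.add_mul_mod_self_left, Nat.mod_mod_of_dvd _ dvd_rfl]
  rw [himg, Finset.sum_image (by
    intro s1 _ s2 _ h
    have := Nat.eq_of_mul_eq_mul_left hL (by have h' : r % L + L * s1 = r % L + L * s2 := h; omega : L * s1 = L * s2)
    exact this)]
  -- now ∑ s in range M, φ ((r % L + L * s) % M) = ∑ u in range M, φ u
  have hinj : Set.InjOn (fun s => (r % L + L * s) % M) ↑(Finset.range M) := by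
    intro s1 h1 s2 h2 h
    simp only [Finset.coe_range, Set.mem_Iio] at h1 h2
    have hmod : (r % L + L * s1) % M = (r % L + L * s2) % M := h
    have h3 : L * s1 ≡ L * s2 [MOD M] := (Nat.ModEq.add_left_cancel' (r % L) hmod)
    have h4 : s1 ≡ s2 [MOD M] := Nat.ModEq.cancel_left_of_coprime hLM.symm h3
    have := h4
    unfold Nat.ModEq at this
    rw [Nat.mod_eq_of_lt h1, Nat.mod_eq_of_lt h2] at this
    exact this
  have himg2 : (Finset.range M).image (fun s => (r % L + L * s) % M) = Finset.range M := by
    apply Finset.eq_of_subset_of_card_le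
    · intro u hu
      simp only [Finset.mem_image] at hu
      obtain ⟨s, _, rfl⟩ := hu
      exact Finset.mem_range.mpr (Nat.mod_lt _ hM)
    · rw [Finset.card_image_of_injOn hinj, Finset.card_range]
  calc ∑ s ∈ Finset.range M, φ ((r % L + L * s) % M)
      = ∑ u ∈ (Finset.range M).image (fun s => (r % L + L * s) % M), φ u :=
        (Finset.sum_image (fun s1 h1 s2 h2 h => hinj h1 h2 h)).symm
    _ = ∑ u ∈ Finset.range M, φ u := by rw [himg2]

private lemma crt_eq (X Z : ℕ) (hXZ : Nat.Coprime X Z) (s t : ℕ)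
    (hs : s < X * Z) (ht : t < X * Z) (h1 : s % X = t % X) (h2 : s % Z = t % Z) : s = t := by
  have h : s ≡ t [MOD X * Z] := (Nat.modEq_and_modEq_iff_modEq_mul hXZ).mp ⟨h1, h2⟩
  unfold Nat.ModEq at h
  rwa [Nat.mod_eq_of_lt hs, Nat.mod_eq_of_lt ht] at h

private lemma succ_mod_ne (x k : ℕ) (hx : 2 ≤ x) : k % x ≠ (k + 1) % x := by
  intro h
  have h1 : k ≡ k + 1 [MOD x] := h
  have h2 : x ∣ (k + 1) - k := (Nat.modEq_iff_dvd' (Nat.le_succ k)).mp h1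
  simp at h2
  omega

private lemma core_lam (x y z : ℕ) (hx : 2 ≤ x) (hy : 2 ≤ y) (hz : 2 ≤ z)
    (hxy : Nat.Coprime x y) (hxz : Nat.Coprime x z) (hyz : Nat.Coprime y z)
    (k m : ℕ) (hk : k < x * y * z) (hm : m < x * y * z) (hne : k ≠ m)
    (hkm : k % (x * y) = m % (x * y)) :
    ∃ lam : ℕ → ℝ, lam k = 1 ∧ lam m = -1 ∧
      (∀ t, t < x * y * z → t % (x * y) = m % (x * y) → t ≠ k → t ≠ m → lam t = 0) ∧
      (∀ L r : ℕ, (L = x * y ∨ L = x * z ∨ L = y * z) →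
        ∑ t ∈ (Finset.range (x * y * z)).filter (fun t => t % L = r % L), lam t = 0) ∧
      ∑ t ∈ Finset.range (x * y * z), lam t = 0 := by
  have hx0 : 0 < x := by omega
  have hy0 : 0 < y := by omega
  have hz0 : 0 < z := by omega
  have hxy0 : 0 < x * y := Nat.mul_pos hx0 hy0
  have hcop : Nat.Coprime (x * y) z := Nat.Coprime.mul hxz hyz
  -- k and m differ mod z
  have hz1 : k % z ≠ m % z := by
    intro h
    exact hne (crt_eq (x * y) z hcop k m hk hm hkm h)
  set f : ℕ → ℝ := fun α => if α = k % x then 1 else if α = (k + 1) % x then -1 else 0 with hf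
  set gg : ℕ → ℝ := fun β => if β = k % y then 1 else if β = (k + 1) % y then -1 else 0 with hgg
  set h : ℕ → ℝ := fun γ => if γ = k % z then 1 else if γ = m % z then -1 else 0 with hh
  set lam : ℕ → ℝ := fun t => f (t % x) * gg (t % y) * h (t % z) with hlam
  have hmx : m % x = k % x := by
    have h1 : k % x = m % x := Nat.ModEq.of_dvd (dvd_mul_right x y) (hkm : k ≡ m [MOD x * y])
    exact h1.symm
  have hmy : m % y = k % y := by
    have h1 : k % y = m % y := Nat.ModEq.of_dvd (dvd_mul_left y x) (hkm : k ≡ m [MOD x * y])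
    exact h1.symm
  have hsumf : ∑ α ∈ Finset.range x, f α = 0 := by
    rw [hf]
    rw [sum_two_ind x (k % x) ((k + 1) % x) (Nat.mod_lt _ hx0) (Nat.mod_lt _ hx0)
      (succ_mod_ne x k hx) 1 (-1)]
    ring
  have hsumg : ∑ β ∈ Finset.range y, gg β = 0 := by
    rw [hgg, sum_two_ind y (k % y) ((k + 1) % y) (Nat.mod_lt _ hy0) (Nat.mod_lt _ hy0)
      (succ_mod_ne y k hy) 1 (-1)]
    ring
  have hsumh : ∑ γ ∈ Finset.range z, h γ = 0 := by
    rw [hh, sum_two_ind z (k % z) (m % z) (Nat.mod_lt _ hz0) (Nat.mod_lt _ hz0) hz1 1 (-1)]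
    ring
  have hclass : ∀ L r : ℕ, (L = x * y ∨ L = x * z ∨ L = y * z) →
      ∑ t ∈ (Finset.range (x * y * z)).filter (fun t => t % L = r % L), lam t = 0 := by
    intro L r hL
    rcases hL with rfl | rfl | rfl
    · have hcong : ∀ t ∈ (Finset.range (x * y * z)).filter (fun t => t % (x * y) = r % (x * y)),
          lam t = (f (r % x) * gg (r % y)) * h (t % z) := by
        intro t ht
        simp only [Finset.mem_filter] at ht
        have h1 : t % x = r % x := by
          rw [← Nat.mod_mod_of_dvd t (dvd_mul_right x y), ht.2,
            Nat.mod_mod_of_dvd r (dvd_mul_right x y)]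
        have h2 : t % y = r % y := by
          rw [← Nat.mod_mod_of_dvd t (dvd_mul_left y x), ht.2,
            Nat.mod_mod_of_dvd r (dvd_mul_left y x)]
        rw [hlam]; dsimp only; rw [h1, h2]
      rw [Finset.sum_congr rfl hcong, ← Finset.mul_sum,
        sum_class_mod (x * y) z hxy0 hz0 hcop r h, hsumh, mul_zero]
    · have heq : x * y * z = x * z * y := by ring
      have hcong : ∀ t ∈ (Finset.range (x * z * y)).filter (fun t => t % (x * z) = r % (x * z)),
          lam t = (f (r % x) * h (r % z)) * gg (t % y) := by
        intro t ht
        simp only [Finset.mem_filter] at ht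
        have h1 : t % x = r % x := by
          rw [← Nat.mod_mod_of_dvd t (dvd_mul_right x z), ht.2,
            Nat.mod_mod_of_dvd r (dvd_mul_right x z)]
        have h2 : t % z = r % z := by
          rw [← Nat.mod_mod_of_dvd t (dvd_mul_left z x), ht.2,
            Nat.mod_mod_of_dvd r (dvd_mul_left z x)]
        rw [hlam]; dsimp only; rw [h1, h2]; ring
      rw [heq, Finset.sum_congr rfl hcong, ← Finset.mul_sum,
        sum_class_mod (x * z) y (Nat.mul_pos hx0 hz0) hy0 (Nat.Coprime.mul hxy hyz.symm) r gg,
        hsumg, mul_zero]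
    · have heq : x * y * z = y * z * x := by ring
      have hcong : ∀ t ∈ (Finset.range (y * z * x)).filter (fun t => t % (y * z) = r % (y * z)),
          lam t = (gg (r % y) * h (r % z)) * f (t % x) := by
        intro t ht
        simp only [Finset.mem_filter] at ht
        have h1 : t % y = r % y := by
          rw [← Nat.mod_mod_of_dvd t (dvd_mul_right y z), ht.2,
            Nat.mod_mod_of_dvd r (dvd_mul_right y z)]
        have h2 : t % z = r % z := by
          rw [← Nat.mod_mod_of_dvd t (dvd_mul_left z y), ht.2,
            Nat.mod_mod_of_dvd r (dvd_mul_left z y)]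
        rw [hlam]; dsimp only; rw [h1, h2]; ring
      rw [heq, Finset.sum_congr rfl hcong, ← Finset.mul_sum,
        sum_class_mod (y * z) x (Nat.mul_pos hy0 hz0) hx0
          (Nat.Coprime.mul hxy.symm hxz.symm) r f,
        hsumf, mul_zero]
  refine ⟨lam, ?_, ?_, ?_, hclass, ?_⟩
  · rw [hlam]; simp [hf, hgg, hh]
  · rw [hlam]; dsimp only; rw [hmx, hmy, hf, hgg, hh]
    simp [Ne.symm hz1]
  · intro t ht htm htk htm'
    have htx : t % x = k % x := by
      have h1 : t % x = m % x := Nat.ModEq.of_dvd (dvd_mul_right x y) (htm : t ≡ m [MOD x * y])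
      rw [h1, hmx]
    have hty : t % y = k % y := by
      have h1 : t % y = m % y := Nat.ModEq.of_dvd (dvd_mul_left y x) (htm : t ≡ m [MOD x * y])
      rw [h1, hmy]
    have htz1 : t % z ≠ k % z := by
      intro hcontra
      exact htk (crt_eq (x * y) z hcop t k ht hk (htm.trans hkm.symm) hcontra)
    have htz2 : t % z ≠ m % z := by
      intro hcontra
      exact htm' (crt_eq (x * y) z hcop t m ht hm htm hcontra)
    rw [hlam]; dsimp only; rw [hh]; simp [htz1, htz2]
  · -- total sum
    have hmaps : ∀ t ∈ Finset.range (x * y * z), t % (x * y) ∈ Finset.range (x * y) :=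
      fun t _ => Finset.mem_range.mpr (Nat.mod_lt t hxy0)
    rw [← Finset.sum_fiberwise_of_maps_to hmaps lam]
    apply Finset.sum_eq_zero
    intro r hr
    have hrr : r % (x * y) = r := Nat.mod_eq_of_lt (Finset.mem_range.mp hr)
    have := hclass (x * y) r (Or.inl rfl)
    rwa [hrr] at this

private lemma support_univ (a b c n : ℕ) (hn : n = a * b + a * c + b * c)
    (g : Equiv.Perm (Fin n)) (hg : g.cycleType = {a * b, a * c, b * c}) :
    g.support = Finset.univ := by
  apply Finset.eq_univ_of_card
  rw [← Equiv.Perm.sum_cycleType, hg]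
  simp only [Multiset.insert_eq_cons, Multiset.sum_cons, Multiset.sum_singleton,
    Fintype.card_fin, hn]
  ring

private lemma period_mem (a b c n : ℕ) (hn : n = a * b + a * c + b * c)
    (g : Equiv.Perm (Fin n)) (hg : g.cycleType = {a * b, a * c, b * c}) (i : Fin n) :
    (g.cycleOf i).support.card = a * b ∨ (g.cycleOf i).support.card = a * c ∨
      (g.cycleOf i).support.card = b * c := by
  have hi : i ∈ g.support := (support_univ a b c n hn g hg) ▸ Finset.mem_univ i
  have hmem : g.cycleOf i ∈ g.cycleFactorsFinset :=
    Equiv.Perm.cycleOf_mem_cycleFactorsFinset_iff.mpr hi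
  have hmem2 : (g.cycleOf i).support.card ∈ g.cycleType := by
    rw [Equiv.Perm.cycleType_def]
    exact Multiset.mem_map_of_mem _ hmem
  rw [hg] at hmem2
  simpa using hmem2

private lemma pow_apply_iff (n : ℕ) (g : Equiv.Perm (Fin n)) (i : Fin n)
    (hi : i ∈ g.support) (s t : ℕ) :
    (g ^ s) i = (g ^ t) i ↔ s % (g.cycleOf i).support.card = t % (g.cycleOf i).support.card := by
  have hcy := Equiv.Perm.isCycleOn_support_cycleOf g i
  have hi' : i ∈ (g.cycleOf i).support :=
    Equiv.Perm.mem_support_cycleOf_iff.mpr ⟨Equiv.Perm.SameCycle.refl g i, hi⟩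
  exact hcy.pow_apply_eq_pow_apply hi'

private lemma core_abc (a b c : ℕ) (ha : 2 ≤ a) (hb : 2 ≤ b) (hc : 2 ≤ c)
    (hab : Nat.Coprime a b) (hac : Nat.Coprime a c) (hbc : Nat.Coprime b c)
    (L0 : ℕ) (hL0 : L0 = a * b ∨ L0 = a * c ∨ L0 = b * c)
    (k m : ℕ) (hk : k < a * b * c) (hm : m < a * b * c) (hne : k ≠ m)
    (hkm : k % L0 = m % L0) :
    ∃ lam : ℕ → ℝ, lam k = 1 ∧ lam m = -1 ∧
      (∀ t, t < a * b * c → t % L0 = m % L0 → t ≠ k → t ≠ m → lam t = 0) ∧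
      (∀ L r : ℕ, (L = a * b ∨ L = a * c ∨ L = b * c) →
        ∑ t ∈ (Finset.range (a * b * c)).filter (fun t => t % L = r % L), lam t = 0) ∧
      ∑ t ∈ Finset.range (a * b * c), lam t = 0 := by
  rcases hL0 with rfl | rfl | rfl
  · exact core_lam a b c ha hb hc hab hac hbc k m hk hm hne hkm
  · have heq : a * c * b = a * b * c := by ring
    obtain ⟨lam, h1, h2, h3, h4, h5⟩ :=
      core_lam a c b ha hc hb hac hab hbc.symm k m (heq ▸ hk) (heq ▸ hm) hne hkm
    rw [heq] at h3 h4 h5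
    refine ⟨lam, h1, h2, h3, ?_, h5⟩
    intro L r hL
    rcases hL with rfl | rfl | rfl
    · exact h4 (a * b) r (Or.inr (Or.inl rfl))
    · exact h4 (a * c) r (Or.inl rfl)
    · have : b * c = c * b := by ring
      rw [this]
      exact h4 (c * b) r (Or.inr (Or.inr rfl))
  · have heq : b * c * a = a * b * c := by ring
    obtain ⟨lam, h1, h2, h3, h4, h5⟩ :=
      core_lam b c a hb hc ha hbc hab.symm hac.symm k m (heq ▸ hk) (heq ▸ hm) hne hkm
    rw [heq] at h3 h4 h5
    refine ⟨lam, h1, h2, h3, ?_, h5⟩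
    intro L r hL
    rcases hL with rfl | rfl | rfl
    · have h := h4 (b * a) r (Or.inr (Or.inl rfl))
      rwa [show b * a = a * b by ring] at h
    · have h := h4 (c * a) r (Or.inr (Or.inr rfl))
      rwa [show c * a = a * c by ring] at h
    · exact h4 (b * c) r (Or.inl rfl)

private lemma relation_sum (a b c n : ℕ) (hn : n = a * b + a * c + b * c)
    (g : Equiv.Perm (Fin n)) (hg : g.cycleType = {a * b, a * c, b * c}) (lam : ℕ → ℝ)
    (hlam : ∀ L r : ℕ, (L = a * b ∨ L = a * c ∨ L = b * c) →
      ∑ t ∈ (Finset.range (a * b * c)).filter (fun t => t % L = r % L), lam t = 0) :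
    ∑ t ∈ Finset.range (a * b * c), lam t • ((g ^ t).permMatrix ℝ) = 0 := by
  have hsupp := support_univ a b c n hn g hg
  ext i j
  simp only [Matrix.sum_apply, Matrix.zero_apply]
  have hterm : ∀ t, (lam t • (g ^ t).permMatrix ℝ) i j
      = lam t * (if (g ^ t) i = j then 1 else 0) := by
    intro t
    rw [Matrix.smul_apply, permMatrix_entry, smul_eq_mul]
  by_cases hex : ∃ t0, (g ^ t0) i = j
  · obtain ⟨t0, ht0⟩ := hex
    have hL := period_mem a b c n hn g hg i
    have hcalc : ∀ t ∈ Finset.range (a * b * c), (lam t • (g ^ t).permMatrix ℝ) i j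
        = if t % (g.cycleOf i).support.card = t0 % (g.cycleOf i).support.card
          then lam t else 0 := by
      intro t _
      rw [hterm t]
      have hiff : (g ^ t) i = j ↔
          t % (g.cycleOf i).support.card = t0 % (g.cycleOf i).support.card := by
        rw [← ht0]
        exact pow_apply_iff n g i (hsupp ▸ Finset.mem_univ i) t t0
      by_cases hcase : (g ^ t) i = j
      · rw [if_pos hcase, if_pos (hiff.mp hcase), mul_one]
      · rw [if_neg hcase, if_neg (fun hmod => hcase (hiff.mpr hmod)), mul_zero]
    rw [Finset.sum_congr rfl hcalc, ← Finset.sum_filter]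
    exact hlam (g.cycleOf i).support.card t0 hL
  · push_neg at hex
    have : ∀ t ∈ Finset.range (a * b * c), (lam t • (g ^ t).permMatrix ℝ) i j = 0 := by
      intro t _
      rw [hterm t, if_neg (hex t), mul_zero]
    rw [Finset.sum_congr rfl this]
    simp

private lemma sum_smul_mem_vectorSpan {V : Type*} [AddCommGroup V] [Module ℝ V]
    (s : Finset ℕ) (u : ℕ → V) (cw : ℕ → ℝ) (hc : ∑ t ∈ s, cw t = 0) :
    (∑ t ∈ s, cw t • u t) ∈ vectorSpan ℝ (u '' ↑s) := by
  rcases s.eq_empty_or_nonempty with rfl | ⟨t0, ht0⟩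
  · simp
  · have heq : ∑ t ∈ s, cw t • u t = ∑ t ∈ s, cw t • (u t - u t0) := by
      simp only [smul_sub, Finset.sum_sub_distrib, ← Finset.sum_smul, hc, zero_smul, sub_zero]
    rw [heq]
    exact Submodule.sum_mem _ fun t ht => Submodule.smul_mem _ _
      (vsub_mem_vectorSpan ℝ (Set.mem_image_of_mem u (Finset.mem_coe.mpr ht))
        (Set.mem_image_of_mem u (Finset.mem_coe.mpr ht0)))

private lemma vectorSpan_convexHull {V : Type*} [AddCommGroup V] [Module ℝ V] (s : Set V) :
    vectorSpan ℝ (convexHull ℝ s) = vectorSpan ℝ s := by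
  rw [← direction_affineSpan, affineSpan_convexHull, direction_affineSpan]


/-- For `P = P(a,b,c)` and positions `p, q` of `Fin n` in the same `⟨g⟩`-orbit, the set of
points of `P` whose `(p, q)` matrix entry vanishes is a facet of `P`. -/
theorem coordinate_facet_three_cycles
    (a b c : ℕ) (ha : 2 ≤ a) (hb : 2 ≤ b) (hc : 2 ≤ c)
    (hab : Nat.Coprime a b) (hac : Nat.Coprime a c) (hbc : Nat.Coprime b c)
    (n : ℕ) (hn : n = a * b + a * c + b * c)
    (g : Equiv.Perm (Fin n))
    (hg : g.cycleType = {a * b, a * c, b * c})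
    (p q : Fin n) (m : ℕ) (hq : q = (g ^ m) p) :
    IsFacetOf (permPolytope n (Subgroup.zpowers g))
      {v ∈ permPolytope n (Subgroup.zpowers g) | v p q = 0} := by

  classical
  have ha0 : 0 < a := by omega
  have hb0 : 0 < b := by omega
  have hc0 : 0 < c := by omega
  set N := a * b * c with hNdef
  have hN0 : 0 < N := Nat.mul_pos (Nat.mul_pos ha0 hb0) hc0
  have hordvd : orderOf g ∣ N := by
    rw [← Equiv.Perm.lcm_cycleType, hg]
    apply Multiset.lcm_dvd.mpr
    intro x hx
    simp only [Multiset.insert_eq_cons, Multiset.mem_cons, Multiset.mem_singleton] at hx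
    rcases hx with rfl | rfl | rfl
    · exact ⟨c, rfl⟩
    · exact ⟨b, by ring⟩
    · exact ⟨a, by ring⟩
  have hgN : g ^ N = 1 := orderOf_dvd_iff_pow_eq_one.mp hordvd
  have hpowmod : ∀ t : ℕ, g ^ t = g ^ (t % N) := by
    intro t
    conv_lhs => rw [← Nat.mod_add_div t N]
    rw [pow_add, pow_mul, hgN, one_pow, mul_one]
  set vtx : ℕ → Matrix (Fin n) (Fin n) ℝ := fun t => (g ^ t).permMatrix ℝ with hvtx
  have hent : ∀ (t : ℕ) (i j : Fin n), vtx t i j = if (g ^ t) i = j then 1 else 0 :=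
    fun t i j => permMatrix_entry _ i j
  -- the vertex set
  have hSP : {M : Matrix (Fin n) (Fin n) ℝ | ∃ σ ∈ Subgroup.zpowers g, M = σ.permMatrix ℝ}
      = vtx '' ↑(Finset.range N) := by
    ext M
    simp only [Set.mem_setOf_eq, Set.mem_image, Finset.mem_coe, Finset.mem_range]
    constructor
    · rintro ⟨σ, hσ, rfl⟩
      obtain ⟨t, rfl⟩ := (Submonoid.mem_powers_iff σ g).mp
        ((isOfFinOrder_of_finite g).mem_powers_iff_mem_zpowers.mpr hσ)
      exact ⟨t % N, Nat.mod_lt t hN0, by rw [hvtx]; dsimp only; rw [← hpowmod t]⟩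
    · rintro ⟨t, ht, rfl⟩
      exact ⟨g ^ t, Subgroup.npow_mem_zpowers g t, rfl⟩
  have hP : permPolytope n (Subgroup.zpowers g) = convexHull ℝ (vtx '' ↑(Finset.range N)) := by
    rw [permPolytope, hSP]
  -- key points
  have hqq : g q ≠ q := by
    intro h
    have hqs : q ∈ g.support := (support_univ a b c n hn g hg) ▸ Finset.mem_univ q
    exact (Equiv.Perm.mem_support.mp hqs) h
  set m' := m % N with hm'def
  have hm'lt : m' < N := Nat.mod_lt m hN0
  have hm'q : (g ^ m') p = q := by rw [← hpowmod m, ← hq]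
  set t0 := (m + 1) % N with ht0def
  have ht0lt : t0 < N := Nat.mod_lt _ hN0
  have ht0q : (g ^ t0) p ≠ q := by
    rw [← hpowmod (m + 1), pow_succ', Equiv.Perm.mul_apply, ← hq]
    exact hqq
  set T0 : Finset ℕ := (Finset.range N).filter (fun t => ¬(g ^ t) p = q) with hT0def
  have ht0T0 : t0 ∈ T0 := Finset.mem_filter.mpr ⟨Finset.mem_range.mpr ht0lt, ht0q⟩
  set S0 : Set (Matrix (Fin n) (Fin n) ℝ) := vtx '' ↑T0 with hS0def
  have hT0sub : (↑T0 : Set ℕ) ⊆ ↑(Finset.range N) :=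
    Finset.coe_subset.mpr (Finset.filter_subset _ _)
  have hS0sub : S0 ⊆ vtx '' ↑(Finset.range N) := Set.image_mono hT0sub
  have hvm'PT : vtx m' ∈ vtx '' ↑(Finset.range N) :=
    Set.mem_image_of_mem vtx (Finset.mem_coe.mpr (Finset.mem_range.mpr hm'lt))
  have hvt0S0 : vtx t0 ∈ S0 := Set.mem_image_of_mem vtx (Finset.mem_coe.mpr ht0T0)
  have hvm'1 : vtx m' p q = 1 := by rw [hent, if_pos hm'q]
  have hS0zero : ∀ v ∈ S0, v p q = 0 := by
    rintro _ ⟨t, ht, rfl⟩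
    rw [hent, if_neg (Finset.mem_filter.mp (Finset.mem_coe.mp ht)).2]
  -- nonneg entries on P
  have hlin : IsLinearMap ℝ (fun w : Matrix (Fin n) (Fin n) ℝ => w p q) :=
    ⟨fun u v => rfl, fun r v => rfl⟩
  have hPnn : ∀ v ∈ permPolytope n (Subgroup.zpowers g), 0 ≤ v p q := by
    intro v hv
    rw [hP] at hv
    refine convexHull_min ?_ (convex_halfSpace_ge hlin 0) hv
    rintro _ ⟨t, _, rfl⟩
    rw [Set.mem_setOf_eq, hent]
    split <;> norm_num
  have hvm'P : vtx m' ∈ permPolytope n (Subgroup.zpowers g) := by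
    rw [hP]; exact subset_convexHull ℝ _ hvm'PT
  have hvt0P : vtx t0 ∈ permPolytope n (Subgroup.zpowers g) := by
    rw [hP]; exact subset_convexHull ℝ _ (hS0sub hvt0S0)
  have hvt0F : vtx t0 ∈ {v ∈ permPolytope n (Subgroup.zpowers g) | v p q = 0} :=
    ⟨hvt0P, hS0zero _ hvt0S0⟩
  -- F as convex hull of S0
  have hF : {v ∈ permPolytope n (Subgroup.zpowers g) | v p q = 0} = convexHull ℝ S0 := by
    apply Set.Subset.antisymm
    · rintro v ⟨hv, hv0⟩
      rw [hP] at hv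
      set TF : Finset (Matrix (Fin n) (Fin n) ℝ) := (Finset.range N).image vtx with hTFdef
      have hTFco : (↑TF : Set (Matrix (Fin n) (Fin n) ℝ)) = vtx '' ↑(Finset.range N) := by
        rw [hTFdef, Finset.coe_image]
      rw [← hTFco, Finset.convexHull_eq] at hv
      obtain ⟨w, hw0, hw1, hwv⟩ := hv
      have hvsum : v = ∑ M ∈ TF, w M • M := by
        rw [← hwv, Finset.centerMass_eq_of_sum_1 _ _ hw1]
        simp
      have hTF01 : ∀ M ∈ TF, M p q = 0 ∨ M p q = 1 := by
        intro M hM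
        obtain ⟨t, _, rfl⟩ := Finset.mem_image.mp hM
        rw [hent]
        split
        · exact Or.inr rfl
        · exact Or.inl rfl
      have hvpq : ∑ M ∈ TF, w M * M p q = 0 := by
        have hcalc : v p q = ∑ M ∈ TF, w M * M p q := by
          rw [hvsum]
          simp [Matrix.sum_apply, Matrix.smul_apply, smul_eq_mul]
        rw [← hcalc, hv0]
      have hwz : ∀ M ∈ TF, M p q ≠ 0 → w M = 0 := by
        intro M hM hMne
        have hnn : ∀ K ∈ TF, 0 ≤ w K * K p q := by
          intro K hK
          rcases hTF01 K hK with h | h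
          · rw [h, mul_zero]
          · rw [h, mul_one]; exact hw0 K hK
        have hz := (Finset.sum_eq_zero_iff_of_nonneg hnn).mp hvpq M hM
        rcases hTF01 M hM with h | h
        · exact absurd h hMne
        · rw [h, mul_one] at hz; exact hz
      set TF0 : Finset (Matrix (Fin n) (Fin n) ℝ) := TF.filter (fun M => M p q = 0) with hTF0def
      have hTF0S0 : (↑TF0 : Set (Matrix (Fin n) (Fin n) ℝ)) ⊆ S0 := by
        intro M hM
        obtain ⟨hMTF, hM0⟩ := Finset.mem_filter.mp (Finset.mem_coe.mp hM)
        obtain ⟨t, htN, rfl⟩ := Finset.mem_image.mp hMTF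
        refine Set.mem_image_of_mem vtx (Finset.mem_coe.mpr (Finset.mem_filter.mpr ⟨htN, ?_⟩))
        intro hgt
        rw [hent, if_pos hgt] at hM0
        exact one_ne_zero hM0
      have hw1' : ∑ M ∈ TF0, w M = 1 := by
        rw [← hw1]
        apply Finset.sum_subset (Finset.filter_subset _ _)
        intro M hM hMnot
        apply hwz M hM
        intro h0
        exact hMnot (Finset.mem_filter.mpr ⟨hM, h0⟩)
      have hcm : TF0.centerMass w id = v := by
        rw [Finset.centerMass_eq_of_sum_1 _ _ hw1', hvsum]
        apply Finset.sum_subset (Finset.filter_subset _ _)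
        intro M hM hMnot
        rw [hwz M hM (fun h0 => hMnot (Finset.mem_filter.mpr ⟨hM, h0⟩)), zero_smul]
      rw [← hcm]
      exact Finset.centerMass_mem_convexHull TF0
        (fun M hM => hw0 M (Finset.filter_subset _ _ hM))
        (hw1' ▸ zero_lt_one) (fun M hM => hTF0S0 (Finset.mem_coe.mpr hM))
    · intro v hv
      refine ⟨?_, ?_⟩
      · rw [hP]; exact convexHull_mono hS0sub hv
      · have hsub : convexHull ℝ S0 ⊆ {w : Matrix (Fin n) (Fin n) ℝ | w p q = 0} :=
          convexHull_min (fun u hu => hS0zero u hu) (convex_hyperplane hlin 0)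
        exact hsub hv
  -- key membership lemma
  have hkey : ∀ s, s < N → (g ^ s) p = q → s ≠ m' → vtx s - vtx m' ∈ vectorSpan ℝ S0 := by
    intro s hs hsq hsm
    have hps : p ∈ g.support := (support_univ a b c n hn g hg) ▸ Finset.mem_univ p
    set L0 := (g.cycleOf p).support.card with hL0def
    have hL0 := period_mem a b c n hn g hg p
    have hsm' : s % L0 = m' % L0 :=
      (pow_apply_iff n g p hps s m').mp (by rw [hsq, hm'q])
    obtain ⟨lam, hk1, hm1, hzero, hclass, htot⟩ :=
      core_abc a b c ha hb hc hab hac hbc L0 hL0 s m' hs hm'lt hsm hsm'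
    have hrel := relation_sum a b c n hn g hg lam hclass
    rw [← hNdef] at hrel htot
    rw [← hNdef] at hzero
    set Rfin : Finset ℕ := (Finset.range N).filter (fun t => (g ^ t) p = q) with hRdef
    have hsplit : ∑ t ∈ Rfin, lam t • vtx t + ∑ t ∈ T0, lam t • vtx t
        = ∑ t ∈ Finset.range N, lam t • vtx t :=
      Finset.sum_filter_add_sum_filter_not _ _ _
    have hRmod : ∀ t ∈ Rfin, t % L0 = m' % L0 := by
      intro t ht
      obtain ⟨htN, htq⟩ := Finset.mem_filter.mp ht
      exact (pow_apply_iff n g p hps t m').mp (by rw [htq, hm'q])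
    have hpairsub : ({s, m'} : Finset ℕ) ⊆ Rfin := by
      intro t ht
      rcases Finset.mem_insert.mp ht with rfl | ht
      · exact Finset.mem_filter.mpr ⟨Finset.mem_range.mpr hs, hsq⟩
      · rw [Finset.mem_singleton.mp ht]
        exact Finset.mem_filter.mpr ⟨Finset.mem_range.mpr hm'lt, hm'q⟩
    have hRzero : ∀ t ∈ Rfin, t ∉ ({s, m'} : Finset ℕ) → lam t = 0 := by
      intro t ht htnot
      simp only [Finset.mem_insert, Finset.mem_singleton, not_or] at htnot
      exact hzero t (Finset.mem_range.mp (Finset.mem_filter.mp ht).1) (hRmod t ht)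
        htnot.1 htnot.2
    have hRsumv : ∑ t ∈ Rfin, lam t • vtx t = vtx s - vtx m' := by
      rw [← Finset.sum_subset hpairsub (fun t ht htn => by rw [hRzero t ht htn, zero_smul]),
        Finset.sum_pair hsm, hk1, hm1]
      rw [one_smul, neg_smul, one_smul]
      abel
    have hRsuml : ∑ t ∈ Rfin, lam t = 0 := by
      rw [← Finset.sum_subset hpairsub (fun t ht htn => hRzero t ht htn),
        Finset.sum_pair hsm, hk1, hm1]
      ring
    have hT0sum : ∑ t ∈ T0, lam t = 0 := by
      have h2 : ∑ t ∈ Rfin, lam t + ∑ t ∈ T0, lam t = ∑ t ∈ Finset.range N, lam t :=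
        Finset.sum_filter_add_sum_filter_not _ _ _
      rw [htot, hRsuml] at h2
      linarith
    have hexp : vtx s - vtx m' = ∑ t ∈ T0, (-lam t) • vtx t := by
      have h0 : (vtx s - vtx m') + ∑ t ∈ T0, lam t • vtx t = 0 := by
        rw [← hRsumv, hsplit]
        exact hrel
      have hneg : ∑ t ∈ T0, (-lam t) • vtx t = -∑ t ∈ T0, lam t • vtx t := by
        rw [← Finset.sum_neg_distrib]
        apply Finset.sum_congr rfl
        intro t _
        rw [neg_smul]
      rw [hneg]
      exact eq_neg_of_add_eq_zero_left h0
    rw [hexp, hS0def]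
    apply sum_smul_mem_vectorSpan
    simp [hT0sum]
  refine ⟨?_, ⟨vtx t0, hvt0F⟩, ?_, ?_⟩
  · -- IsExposed
    intro _
    refine ⟨LinearMap.toContinuousLinearMap
      { toFun := fun v : Matrix (Fin n) (Fin n) ℝ => -(v p q)
        map_add' := fun u v => by show -((u + v) p q) = -(u p q) + -(v p q); rw [Matrix.add_apply]; ring
        map_smul' := fun r v => by
          show -((r • v) p q) = r * -(v p q)
          rw [Matrix.smul_apply, smul_eq_mul]; ring }, ?_⟩
    rw [LinearMap.coe_toContinuousLinearMap']
    ext v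
    simp only [Set.mem_setOf_eq, LinearMap.coe_mk, AddHom.coe_mk]
    constructor
    · rintro ⟨hv, hv0⟩
      refine ⟨hv, fun y hy => ?_⟩
      rw [hv0, neg_zero]
      exact neg_nonpos_of_nonneg (hPnn y hy)
    · rintro ⟨hv, hmax⟩
      refine ⟨hv, ?_⟩
      have h1 := hmax (vtx t0) hvt0P
      have h2 : vtx t0 p q = 0 := hS0zero _ hvt0S0
      rw [h2, neg_zero] at h1
      have h3 := hPnn v hv
      linarith
  · -- F ≠ P
    intro hFP
    have h1 : vtx m' ∈ {v ∈ permPolytope n (Subgroup.zpowers g) | v p q = 0} := by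
      rw [hFP]; exact hvm'P
    have h2 := h1.2
    rw [hvm'1] at h2
    exact one_ne_zero h2
  · -- dimension
    have hVF : vectorSpan ℝ {v ∈ permPolytope n (Subgroup.zpowers g) | v p q = 0}
        = vectorSpan ℝ S0 := by rw [hF, vectorSpan_convexHull]
    have hVP : vectorSpan ℝ (permPolytope n (Subgroup.zpowers g))
        = vectorSpan ℝ (vtx '' ↑(Finset.range N)) := by rw [hP, vectorSpan_convexHull]
    rw [hVF, hVP]
    set V0 := vectorSpan ℝ S0 with hV0def
    set Vp := vectorSpan ℝ (vtx '' ↑(Finset.range N)) with hVpdef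
    set e0 : Matrix (Fin n) (Fin n) ℝ →ₗ[ℝ] ℝ :=
      { toFun := fun v => v p q
        map_add' := fun u v => rfl
        map_smul' := fun r v => rfl } with he0
    set d := vtx m' - vtx t0 with hd
    have hdVp : d ∈ Vp := vsub_mem_vectorSpan ℝ hvm'PT (hS0sub hvt0S0)
    have hvt00 : vtx t0 p q = 0 := hS0zero _ hvt0S0
    have hed : e0 d = 1 := by
      show (vtx m' - vtx t0) p q = 1
      rw [Matrix.sub_apply, hvm'1, hvt00, sub_zero]
    have hV0Vp : V0 ≤ Vp := vectorSpan_mono ℝ hS0sub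
    have hV0ker : V0 ≤ LinearMap.ker e0 := by
      rw [hV0def, vectorSpan_def]
      apply Submodule.span_le.mpr
      rintro w hw
      rw [Set.mem_vsub] at hw
      obtain ⟨u1, hu1, u2, hu2, rfl⟩ := hw
      simp only [SetLike.mem_coe, LinearMap.mem_ker]
      show (u1 - u2) p q = 0
      rw [Matrix.sub_apply, hS0zero _ hu1, hS0zero _ hu2, sub_zero]
    have hlt : Vp ⊓ LinearMap.ker e0 < Vp := by
      refine lt_of_le_of_ne inf_le_left ?_
      intro hcontra
      have hd2 : d ∈ Vp ⊓ LinearMap.ker e0 := by rw [hcontra]; exact hdVp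
      have hker : e0 d = 0 := (Submodule.mem_inf.mp hd2).2
      rw [hed] at hker
      exact one_ne_zero hker
    have hub : Module.finrank ℝ V0 < Module.finrank ℝ Vp :=
      lt_of_le_of_lt (Submodule.finrank_mono (le_inf hV0Vp hV0ker))
        (Submodule.finrank_lt_finrank_of_lt hlt)
    have hsup : Vp ≤ V0 ⊔ (Submodule.span ℝ {d}) := by
      rw [hVpdef, vectorSpan_eq_span_vsub_set_right ℝ (hS0sub hvt0S0)]
      apply Submodule.span_le.mpr
      rintro w ⟨u, ⟨t, ht, rfl⟩, rfl⟩
      have htN : t < N := Finset.mem_range.mp (Finset.mem_coe.mp ht)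
      show vtx t - vtx t0 ∈ V0 ⊔ Submodule.span ℝ {d}
      by_cases htq : (g ^ t) p = q
      · by_cases hts : t = m'
        · subst hts
          exact Submodule.mem_sup_right (Submodule.mem_span_singleton_self d)
        · have h1 : vtx t - vtx m' ∈ V0 := hkey t htN htq hts
          have heq2 : vtx t - vtx t0 = (vtx t - vtx m') + d := by rw [hd]; abel
          rw [heq2]
          exact Submodule.add_mem _ (Submodule.mem_sup_left h1)
            (Submodule.mem_sup_right (Submodule.mem_span_singleton_self d))
      · have htT0 : t ∈ T0 := Finset.mem_filter.mpr ⟨Finset.mem_range.mpr htN, htq⟩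
        exact Submodule.mem_sup_left
          (vsub_mem_vectorSpan ℝ (Set.mem_image_of_mem vtx (Finset.mem_coe.mpr htT0)) hvt0S0)
    have hdne : d ≠ 0 := by
      intro h0
      rw [h0, map_zero] at hed
      exact zero_ne_one hed
    have hspan1 : Module.finrank ℝ (Submodule.span ℝ ({d} : Set (Matrix (Fin n) (Fin n) ℝ))) = 1 := by
      rw [finrank_span_singleton hdne]
    have hlow : Module.finrank ℝ Vp ≤ Module.finrank ℝ V0 + 1 := by
      have h1 : Module.finrank ℝ Vp
          ≤ Module.finrank ℝ ↥(V0 ⊔ Submodule.span ℝ ({d} : Set (Matrix (Fin n) (Fin n) ℝ))) :=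
        Submodule.finrank_mono hsup
      have h2 := Submodule.finrank_sup_add_finrank_inf_eq V0
        (Submodule.span ℝ ({d} : Set (Matrix (Fin n) (Fin n) ℝ)))
      omega
    omega
end

section
/- Let a, b, c ≥ 2 be pairwise coprime, n = a*b + a*c + b*c, g ∈ Equiv.Perm (Fin n) with g.cycleType = {a*b, a*c, b*c}, and P = P(⟨g⟩). For m ∈ ℕ write ρ_x(m) := (m mod a, m mod b), ρ_y(m) := (m mod a, m mod c), ρ_z(m) := (m mod b, m mod c). Let S_x be a proper subset of (ZMod a) × (ZMod b), S_y a proper subset of (ZMod a) × (ZMod c), S_z a proper subset of (ZMod b) × (ZMod c), and for i ∈ {x, y, z} set F_i := {m ∈ Finset.range (a*b*c) | ρ_i(m) ∈ S_i}. Assume: (1) F_x ∩ F_y ∩ F_z = ∅; and (2) for every permutation (i, j, k) of (x, y, z): if m ∈ F_i and there exists m' ∈ F_i ∩ F_j with ρ_k(m) = ρ_k(m'), then m ∈ F_j. Then convexHull ℝ {M(g^m) | m ∈ F_x ∪ F_y ∪ F_z} is an exposed face of P (not necessarily proper). -/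
/-- The linear functional reading off a single entry of a matrix. -/
noncomputable def entryLM (n : ℕ) (i j : Fin n) : Matrix (Fin n) (Fin n) ℝ →ₗ[ℝ] ℝ where
  toFun M := M i j
  map_add' _ _ := rfl
  map_smul' _ _ := rfl

/-- The continuous linear functional reading off a single entry of a matrix. -/
noncomputable def entryCLM (n : ℕ) (i j : Fin n) : Matrix (Fin n) (Fin n) ℝ →L[ℝ] ℝ :=
  ⟨entryLM n i j, continuous_id.matrix_elem i j⟩

@[simp] lemma entryCLM_apply (n : ℕ) (i j : Fin n) (M : Matrix (Fin n) (Fin n) ℝ) :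
    entryCLM n i j M = M i j := rfl

open Classical in
/-- `1` on `S`, `-1` on `U \ S`, `0` elsewhere (composed with `ρ`). -/
noncomputable def phiAux {γ : Type*} (S U : Set γ) (ρ : ℕ → γ) : ℕ → ℝ :=
  fun j => (if ρ j ∈ S then 1 else 0) - (if ρ j ∈ U \ S then 1 else 0)

lemma phiAux_one {γ : Type*} {S U : Set γ} {ρ : ℕ → γ} {j : ℕ} (h : ρ j ∈ S) :
    phiAux S U ρ j = 1 := by simp [phiAux, h]

lemma phiAux_neg {γ : Type*} {S U : Set γ} {ρ : ℕ → γ} {j : ℕ} (hU : ρ j ∈ U) (hS : ρ j ∉ S) :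
    phiAux S U ρ j = -1 := by simp [phiAux, hU, hS]

lemma phiAux_zero {γ : Type*} {S U : Set γ} {ρ : ℕ → γ} {j : ℕ} (hU : ρ j ∉ U) (hS : ρ j ∉ S) :
    phiAux S U ρ j = 0 := by simp [phiAux, hU, hS]

lemma phiAux_nonpos {γ : Type*} {S U : Set γ} {ρ : ℕ → γ} {j : ℕ} (hS : ρ j ∉ S) :
    phiAux S U ρ j ≤ 0 := by
  classical
  simp only [phiAux, hS, if_false, zero_sub, neg_nonpos]
  split_ifs <;> norm_num

lemma phiAux_congr {γ : Type*} (S U : Set γ) (ρ : ℕ → γ) {j j' : ℕ} (h : ρ j = ρ j') :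
    phiAux S U ρ j = phiAux S U ρ j' := by unfold phiAux; rw [h]

lemma cast_mod_dvd (a k m : ℕ) (h : a ∣ k) : ((m % k : ℕ) : ZMod a) = (m : ZMod a) := by
  conv_rhs => rw [← Nat.mod_add_div m k]
  push_cast
  rw [(ZMod.natCast_eq_zero_iff k a).2 h]
  ring

open Finset in
/-- The convex hull of the maximizers (value `1`, versus `≤ 0` for the others) of a
continuous linear functional over a finite set is an exposed face of the convex hull. -/
theorem exposed_of_finset {E : Type*} [AddCommGroup E] [Module ℝ E] [TopologicalSpace E]
    (V G : Finset E) (l : E →L[ℝ] ℝ)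
    (hV : ∀ v ∈ V, l v = 1 ∨ l v ≤ 0)
    (hG : ∀ v, v ∈ G ↔ v ∈ V ∧ l v = 1) :
    IsExposed ℝ (convexHull ℝ (V : Set E)) (convexHull ℝ (G : Set E)) := by
  intro _hne
  refine ⟨l, ?_⟩
  have hGV : (G : Set E) ⊆ (V : Set E) := fun v hv => ((hG v).1 hv).1
  have hle1 : ∀ x ∈ convexHull ℝ (V : Set E), l x ≤ 1 := by
    intro x hx
    have : convexHull ℝ (V : Set E) ⊆ {z | l z ≤ 1} := by
      apply convexHull_min
      · intro v hv
        rcases hV v hv with h | h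
        · exact le_of_eq h
        · exact h.trans zero_le_one
      · exact convex_halfSpace_le (LinearMap.isLinear _) 1
    exact this hx
  have heq1 : ∀ x ∈ convexHull ℝ (G : Set E), l x = 1 := by
    intro x hx
    have : convexHull ℝ (G : Set E) ⊆ {z | l z = 1} := by
      apply convexHull_min
      · intro v hv; exact ((hG v).1 hv).2
      · exact convex_hyperplane (LinearMap.isLinear _) 1
    exact this hx
  apply Set.Subset.antisymm
  · intro x hx
    refine ⟨convexHull_mono hGV hx, fun y hy => ?_⟩
    rw [heq1 x hx]
    exact hle1 y hy
  · rintro x ⟨hxV, hmax⟩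
    obtain ⟨v₀, hv₀⟩ := convexHull_nonempty_iff.1 _hne
    have hlx : l x = 1 := by
      refine le_antisymm (hle1 x hxV) ?_
      calc (1:ℝ) = l v₀ := (heq1 v₀ (subset_convexHull ℝ _ hv₀)).symm
        _ ≤ l x := hmax v₀ (convexHull_mono hGV (subset_convexHull ℝ _ hv₀))
    rw [Finset.convexHull_eq] at hxV
    obtain ⟨w, hw₀, hw₁, hwx⟩ := hxV
    have hlcm : ∑ v ∈ V, w v * l v = 1 := by
      have := congrArg l hwx
      rw [Finset.centerMass_eq_of_sum_1 _ _ hw₁] at this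
      rw [map_sum] at this
      simpa [hlx] using this
    have hzero : ∀ v ∈ V, w v * (1 - l v) = 0 := by
      have hsum : ∑ v ∈ V, w v * (1 - l v) = 0 := by
        have : ∑ v ∈ V, w v * (1 - l v) = (∑ v ∈ V, w v) - ∑ v ∈ V, w v * l v := by
          rw [← Finset.sum_sub_distrib]; congr 1; ext v; ring
        rw [this, hw₁, hlcm, sub_self]
      intro v hv
      refine (Finset.sum_eq_zero_iff_of_nonneg ?_).1 hsum v hv
      intro i hi
      have h1 : l i ≤ 1 := by
        rcases hV i hi with h | h
        · exact le_of_eq h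
        · exact h.trans zero_le_one
      have := hw₀ i hi
      nlinarith
    have hbadzero : ∀ v ∈ V, v ∉ G → w v = 0 := by
      intro v hv hvg
      have hl0 : l v ≤ 0 := by
        rcases hV v hv with h | h
        · exact absurd ((hG v).2 ⟨hv, h⟩) hvg
        · exact h
      have := hzero v hv
      rcases mul_eq_zero.1 this with h | h
      · exact h
      · nlinarith
    have hsumG : ∑ v ∈ G, w v = 1 := by
      rw [← hw₁]
      apply Finset.sum_subset
      · intro v hv; exact ((hG v).1 hv).1
      · intro v hv hvg; exact hbadzero v hv hvg
    have hxG : G.centerMass w id = x := by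
      rw [Finset.centerMass_eq_of_sum_1 _ _ hsumG, ← hwx,
        Finset.centerMass_eq_of_sum_1 _ _ hw₁]
      apply Finset.sum_subset
      · intro v hv; exact ((hG v).1 hv).1
      · intro v hv hvg; simp [hbadzero v hv hvg]
    rw [← hxG]
    exact G.centerMass_mem_convexHull (fun v hv => hw₀ v (((hG v).1 hv).1))
      (by rw [hsumG]; norm_num) (fun v hv => Finset.mem_coe.2 hv)

/-- Face criterion for `P(a,b,c)`: if the vertex sets `F_x, F_y, F_z` determined by proper
subsets `S_x, S_y, S_z` of the residue pairs satisfy the intersection conditions, then the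
convex hull of the corresponding vertices is an exposed face of `P(a,b,c)`
(possibly not proper). -/
theorem face_criterion_three_cycles
    (a b c : ℕ) (ha : 2 ≤ a) (hb : 2 ≤ b) (hc : 2 ≤ c)
    (hab : Nat.Coprime a b) (hac : Nat.Coprime a c) (hbc : Nat.Coprime b c)
    (n : ℕ) (hn : n = a * b + a * c + b * c)
    (g : Equiv.Perm (Fin n))
    (hg : g.cycleType = {a * b, a * c, b * c})
    (Sx : Set (ZMod a × ZMod b)) (hSx : Sx ≠ Set.univ)
    (Sy : Set (ZMod a × ZMod c)) (hSy : Sy ≠ Set.univ)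
    (Sz : Set (ZMod b × ZMod c)) (hSz : Sz ≠ Set.univ)
    (Fx Fy Fz : Set ℕ)
    (hFx : Fx = {m : ℕ | m < a * b * c ∧ ((m : ZMod a), (m : ZMod b)) ∈ Sx})
    (hFy : Fy = {m : ℕ | m < a * b * c ∧ ((m : ZMod a), (m : ZMod c)) ∈ Sy})
    (hFz : Fz = {m : ℕ | m < a * b * c ∧ ((m : ZMod b), (m : ZMod c)) ∈ Sz})
    (h1 : Fx ∩ Fy ∩ Fz = ∅)
    (hxyz : ∀ m ∈ Fx, (∃ m' ∈ Fx ∩ Fy,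
      ((m : ZMod b), (m : ZMod c)) = ((m' : ZMod b), (m' : ZMod c))) → m ∈ Fy)
    (hxzy : ∀ m ∈ Fx, (∃ m' ∈ Fx ∩ Fz,
      ((m : ZMod a), (m : ZMod c)) = ((m' : ZMod a), (m' : ZMod c))) → m ∈ Fz)
    (hyxz : ∀ m ∈ Fy, (∃ m' ∈ Fy ∩ Fx,
      ((m : ZMod b), (m : ZMod c)) = ((m' : ZMod b), (m' : ZMod c))) → m ∈ Fx)
    (hyzx : ∀ m ∈ Fy, (∃ m' ∈ Fy ∩ Fz,
      ((m : ZMod a), (m : ZMod b)) = ((m' : ZMod a), (m' : ZMod b))) → m ∈ Fz)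
    (hzxy : ∀ m ∈ Fz, (∃ m' ∈ Fz ∩ Fx,
      ((m : ZMod a), (m : ZMod c)) = ((m' : ZMod a), (m' : ZMod c))) → m ∈ Fx)
    (hzyx : ∀ m ∈ Fz, (∃ m' ∈ Fz ∩ Fy,
      ((m : ZMod a), (m : ZMod b)) = ((m' : ZMod a), (m' : ZMod b))) → m ∈ Fy) :
    IsExposed ℝ (permPolytope n (Subgroup.zpowers g))
      (convexHull ℝ {M : Matrix (Fin n) (Fin n) ℝ |
        ∃ m ∈ Fx ∪ Fy ∪ Fz, M = (g ^ m).permMatrix ℝ}) := by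
  classical
  have ha0 : 0 < a := lt_of_lt_of_le zero_lt_two ha
  have hb0 : 0 < b := lt_of_lt_of_le zero_lt_two hb
  have hc0 : 0 < c := lt_of_lt_of_le zero_lt_two hc
  have hN0 : 0 < a * b * c := by positivity
  -- the order of `g` is `a*b*c`
  have horder : orderOf g = a * b * c := by
    rw [← Equiv.Perm.lcm_cycleType, hg]
    rw [show ({a*b, a*c, b*c} : Multiset ℕ) = (a*b) ::ₘ (a*c) ::ₘ {b*c} from rfl,
      Multiset.lcm_cons, Multiset.lcm_cons, Multiset.lcm_singleton, normalize_eq]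
    apply Nat.dvd_antisymm
    · exact Nat.lcm_dvd (dvd_mul_right _ _)
        (Nat.lcm_dvd ⟨b, by ring⟩ ⟨a, by ring⟩)
    · exact (Nat.Coprime.mul hac hbc).mul_dvd_of_dvd_of_dvd (Nat.dvd_lcm_left _ _)
        (((dvd_mul_left c b).trans (Nat.dvd_lcm_right (a*c) (b*c))).trans (Nat.dvd_lcm_right _ _))
  -- representative points on each cycle
  have hrep : ∀ L : ℕ, 0 < L → L ∈ g.cycleType →
      ∃ p : Fin n, ∀ j m : ℕ, ((g ^ j) p = (g ^ m) p ↔ j % L = m % L) := by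
    intro L hL0 hL
    rw [Equiv.Perm.cycleType_def] at hL
    obtain ⟨σ, hσ, hcard⟩ := Multiset.mem_map.1 hL
    have hσ' : σ ∈ g.cycleFactorsFinset := hσ
    obtain ⟨p, hp⟩ := Finset.card_pos.1 (by rw [show σ.support.card = L from hcard]; exact hL0)
    have hco : σ = g.cycleOf p := Equiv.Perm.cycle_is_cycleOf hp hσ'
    have hps : p ∈ (g.cycleOf p).support := hco ▸ hp
    have hLc : (g.cycleOf p).support.card = L := by rw [← hco]; exact hcard
    refine ⟨p, fun j m => ?_⟩
    rw [(Equiv.Perm.isCycleOn_support_cycleOf g p).pow_apply_eq_pow_apply hps, hLc]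
    exact Iff.rfl
  obtain ⟨p₁, hp₁⟩ := hrep (a*b) (by positivity) (by rw [hg]; simp)
  obtain ⟨p₂, hp₂⟩ := hrep (a*c) (by positivity) (by rw [hg]; simp)
  obtain ⟨p₃, hp₃⟩ := hrep (b*c) (by positivity) (by rw [hg]; simp)
  -- the three coefficient functions
  set ρx : ℕ → ZMod a × ZMod b := fun m => ((m : ZMod a), (m : ZMod b)) with hρx
  set ρy : ℕ → ZMod a × ZMod c := fun m => ((m : ZMod a), (m : ZMod c)) with hρy
  set ρz : ℕ → ZMod b × ZMod c := fun m => ((m : ZMod b), (m : ZMod c)) with hρz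
  set Ux : Set (ZMod a × ZMod b) := {p | ∃ m', (m' ∈ Fy ∧ m' ∈ Fz) ∧ p = ρx m'} with hUx
  set Uy : Set (ZMod a × ZMod c) := {p | ∃ m', (m' ∈ Fx ∧ m' ∈ Fz) ∧ p = ρy m'} with hUy
  set Uz : Set (ZMod b × ZMod c) := {p | ∃ m', (m' ∈ Fx ∧ m' ∈ Fy) ∧ p = ρz m'} with hUz
  set φx : ℕ → ℝ := phiAux Sx Ux ρx with hφx
  set φy : ℕ → ℝ := phiAux Sy Uy ρy with hφy
  set φz : ℕ → ℝ := phiAux Sz Uz ρz with hφz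
  -- the exposing functional
  set l : Matrix (Fin n) (Fin n) ℝ →L[ℝ] ℝ :=
    (∑ j ∈ Finset.range (a*b), φx j • entryCLM n p₁ ((g ^ j) p₁)) +
    ((∑ j ∈ Finset.range (a*c), φy j • entryCLM n p₂ ((g ^ j) p₂)) +
     (∑ j ∈ Finset.range (b*c), φz j • entryCLM n p₃ ((g ^ j) p₃))) with hl
  -- value of the functional on vertices
  have hsum : ∀ (L : ℕ) (p : Fin n) (φ : ℕ → ℝ), 0 < L →
      (∀ j m' : ℕ, ((g ^ j) p = (g ^ m') p ↔ j % L = m' % L)) →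
      ∀ m : ℕ, (∑ j ∈ Finset.range L, φ j * ((g ^ m).permMatrix ℝ) p ((g ^ j) p)) = φ (m % L) := by
    intro L p φ hL hp m
    have hterm : ∀ j ∈ Finset.range L, φ j * ((g ^ m).permMatrix ℝ) p ((g ^ j) p)
        = if m % L = j then φ j else 0 := by
      intro j hj
      have hjlt := Finset.mem_range.1 hj
      by_cases h : (g ^ m) p = (g ^ j) p
      · have hj' : m % L = j := by
          have := (hp m j).1 h
          rwa [Nat.mod_eq_of_lt hjlt] at this
        simp [Equiv.Perm.permMatrix, PEquiv.toMatrix_apply, Equiv.toPEquiv_apply, h, hj']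
      · have hj' : ¬ (m % L = j) := by
          intro hc
          exact h ((hp m j).2 (by rw [Nat.mod_eq_of_lt hjlt]; exact hc))
        simp [Equiv.Perm.permMatrix, PEquiv.toMatrix_apply, Equiv.toPEquiv_apply, h, hj']
    rw [Finset.sum_congr rfl hterm, Finset.sum_ite_eq (Finset.range L) (m % L) φ,
      if_pos (Finset.mem_range.2 (Nat.mod_lt m hL))]
  have hρxmod : ∀ m : ℕ, ρx (m % (a*b)) = ρx m := by
    intro m
    rw [hρx]
    dsimp only
    rw [cast_mod_dvd a (a*b) m (dvd_mul_right a b), cast_mod_dvd b (a*b) m (dvd_mul_left b a)]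
  have hρymod : ∀ m : ℕ, ρy (m % (a*c)) = ρy m := by
    intro m
    rw [hρy]
    dsimp only
    rw [cast_mod_dvd a (a*c) m (dvd_mul_right a c), cast_mod_dvd c (a*c) m (dvd_mul_left c a)]
  have hρzmod : ∀ m : ℕ, ρz (m % (b*c)) = ρz m := by
    intro m
    rw [hρz]
    dsimp only
    rw [cast_mod_dvd b (b*c) m (dvd_mul_right b c), cast_mod_dvd c (b*c) m (dvd_mul_left c b)]
  have hval : ∀ m : ℕ, l ((g ^ m).permMatrix ℝ) = φx m + φy m + φz m := by
    intro m
    rw [hl]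
    simp only [ContinuousLinearMap.add_apply, ContinuousLinearMap.coe_sum',
      Finset.sum_apply, ContinuousLinearMap.coe_smul', Pi.smul_apply, entryCLM_apply,
      smul_eq_mul]
    rw [hsum (a*b) p₁ φx (by positivity) hp₁ m, hsum (a*c) p₂ φy (by positivity) hp₂ m,
      hsum (b*c) p₃ φz (by positivity) hp₃ m, hφx, hφy, hφz,
      phiAux_congr Sx Ux ρx (hρxmod m), phiAux_congr Sy Uy ρy (hρymod m),
      phiAux_congr Sz Uz ρz (hρzmod m)]
    ring
  -- membership unfoldings
  have hmemx : ∀ m : ℕ, m ∈ Fx ↔ (m < a*b*c ∧ ρx m ∈ Sx) := by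
    intro m; rw [hFx]; exact Iff.rfl
  have hmemy : ∀ m : ℕ, m ∈ Fy ↔ (m < a*b*c ∧ ρy m ∈ Sy) := by
    intro m; rw [hFy]; exact Iff.rfl
  have hmemz : ∀ m : ℕ, m ∈ Fz ↔ (m < a*b*c ∧ ρz m ∈ Sz) := by
    intro m; rw [hFz]; exact Iff.rfl
  -- the key combinatorial computation
  have hkey1 : ∀ m ∈ Fx ∪ Fy ∪ Fz, φx m + φy m + φz m = 1 := by
    intro m hm
    have hmN : m < a*b*c := by
      rcases hm with (h | h) | h
      · exact ((hmemx m).1 h).1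
      · exact ((hmemy m).1 h).1
      · exact ((hmemz m).1 h).1
    by_cases hx : m ∈ Fx <;> by_cases hy : m ∈ Fy <;> by_cases hz : m ∈ Fz
    · exact absurd (h1 ▸ (⟨⟨hx, hy⟩, hz⟩ : m ∈ Fx ∩ Fy ∩ Fz)) (Set.notMem_empty m)
    · -- x, y, not z
      have ex : φx m = 1 := phiAux_one ((hmemx m).1 hx).2
      have ey : φy m = 1 := phiAux_one ((hmemy m).1 hy).2
      have ez : φz m = -1 := phiAux_neg (show ρz m ∈ Uz from ⟨m, ⟨hx, hy⟩, rfl⟩)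
        (show ρz m ∉ Sz from fun h => hz ((hmemz m).2 ⟨hmN, h⟩))
      rw [ex, ey, ez]; norm_num
    · -- x, not y, z
      have ex : φx m = 1 := phiAux_one ((hmemx m).1 hx).2
      have ey : φy m = -1 := phiAux_neg (show ρy m ∈ Uy from ⟨m, ⟨hx, hz⟩, rfl⟩)
        (show ρy m ∉ Sy from fun h => hy ((hmemy m).2 ⟨hmN, h⟩))
      have ez : φz m = 1 := phiAux_one ((hmemz m).1 hz).2
      rw [ex, ey, ez]; norm_num
    · -- x only
      have ex : φx m = 1 := phiAux_one ((hmemx m).1 hx).2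
      have ey : φy m = 0 := phiAux_zero
        (show ρy m ∉ Uy from fun hU => hz (hxzy m hx (by
          obtain ⟨m', ⟨h1', h2'⟩, heq⟩ := hU
          exact ⟨m', ⟨h1', h2'⟩, heq⟩)))
        (show ρy m ∉ Sy from fun h => hy ((hmemy m).2 ⟨hmN, h⟩))
      have ez : φz m = 0 := phiAux_zero
        (show ρz m ∉ Uz from fun hU => hy (hxyz m hx (by
          obtain ⟨m', ⟨h1', h2'⟩, heq⟩ := hU
          exact ⟨m', ⟨h1', h2'⟩, heq⟩)))
        (show ρz m ∉ Sz from fun h => hz ((hmemz m).2 ⟨hmN, h⟩))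
      rw [ex, ey, ez]; norm_num
    · -- not x, y, z
      have ex : φx m = -1 := phiAux_neg (show ρx m ∈ Ux from ⟨m, ⟨hy, hz⟩, rfl⟩)
        (show ρx m ∉ Sx from fun h => hx ((hmemx m).2 ⟨hmN, h⟩))
      have ey : φy m = 1 := phiAux_one ((hmemy m).1 hy).2
      have ez : φz m = 1 := phiAux_one ((hmemz m).1 hz).2
      rw [ex, ey, ez]; norm_num
    · -- y only
      have ex : φx m = 0 := phiAux_zero
        (show ρx m ∉ Ux from fun hU => hz (hyzx m hy (by
          obtain ⟨m', ⟨h1', h2'⟩, heq⟩ := hU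
          exact ⟨m', ⟨h1', h2'⟩, heq⟩)))
        (show ρx m ∉ Sx from fun h => hx ((hmemx m).2 ⟨hmN, h⟩))
      have ey : φy m = 1 := phiAux_one ((hmemy m).1 hy).2
      have ez : φz m = 0 := phiAux_zero
        (show ρz m ∉ Uz from fun hU => hx (hyxz m hy (by
          obtain ⟨m', ⟨h1', h2'⟩, heq⟩ := hU
          exact ⟨m', ⟨h2', h1'⟩, heq⟩)))
        (show ρz m ∉ Sz from fun h => hz ((hmemz m).2 ⟨hmN, h⟩))
      rw [ex, ey, ez]; norm_num
    · -- z only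
      have ex : φx m = 0 := phiAux_zero
        (show ρx m ∉ Ux from fun hU => hy (hzyx m hz (by
          obtain ⟨m', ⟨h1', h2'⟩, heq⟩ := hU
          exact ⟨m', ⟨h2', h1'⟩, heq⟩)))
        (show ρx m ∉ Sx from fun h => hx ((hmemx m).2 ⟨hmN, h⟩))
      have ey : φy m = 0 := phiAux_zero
        (show ρy m ∉ Uy from fun hU => hx (hzxy m hz (by
          obtain ⟨m', ⟨h1', h2'⟩, heq⟩ := hU
          exact ⟨m', ⟨h2', h1'⟩, heq⟩)))
        (show ρy m ∉ Sy from fun h => hy ((hmemy m).2 ⟨hmN, h⟩))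
      have ez : φz m = 1 := phiAux_one ((hmemz m).1 hz).2
      rw [ex, ey, ez]; norm_num
    · -- none: contradiction with hm
      rcases hm with (h | h) | h
      · exact absurd h hx
      · exact absurd h hy
      · exact absurd h hz
  have hkey0 : ∀ m : ℕ, m < a*b*c → m ∉ Fx ∪ Fy ∪ Fz → φx m + φy m + φz m ≤ 0 := by
    intro m hmN hm
    have hx : ρx m ∉ Sx := fun h => hm (Or.inl (Or.inl ((hmemx m).2 ⟨hmN, h⟩)))
    have hy : ρy m ∉ Sy := fun h => hm (Or.inl (Or.inr ((hmemy m).2 ⟨hmN, h⟩)))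
    have hz : ρz m ∉ Sz := fun h => hm (Or.inr ((hmemz m).2 ⟨hmN, h⟩))
    have e1 : φx m ≤ 0 := phiAux_nonpos hx
    have e2 : φy m ≤ 0 := phiAux_nonpos hy
    have e3 : φz m ≤ 0 := phiAux_nonpos hz
    linarith
  -- finite vertex sets
  set V : Finset (Matrix (Fin n) (Fin n) ℝ) :=
    (Finset.range (a*b*c)).image (fun m => (g ^ m).permMatrix ℝ) with hV
  set G : Finset (Matrix (Fin n) (Fin n) ℝ) :=
    V.filter (fun v => l v = 1) with hG
  have hPV : {M : Matrix (Fin n) (Fin n) ℝ | ∃ σ ∈ Subgroup.zpowers g, M = σ.permMatrix ℝ}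
      = (V : Set (Matrix (Fin n) (Fin n) ℝ)) := by
    ext M
    constructor
    · rintro ⟨σ, hσ, rfl⟩
      obtain ⟨k, hk⟩ := Subgroup.mem_zpowers_iff.1 hσ
      rw [Finset.mem_coe, hV, Finset.mem_image]
      refine ⟨(k % (a*b*c : ℕ)).toNat, Finset.mem_range.2 ?_, ?_⟩
      · have h1 : (k % (a*b*c : ℕ)) < (a*b*c : ℕ) :=
          Int.emod_lt_of_pos k (by exact_mod_cast hN0)
        omega
      · congr 1
        rw [← hk, ← horder]
        have h0 : (0:ℤ) ≤ k % (orderOf g : ℕ) :=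
          Int.emod_nonneg k (by exact_mod_cast (orderOf_pos g).ne')
        rw [← zpow_natCast, Int.toNat_of_nonneg (by rw [horder] at *; exact h0)]
        rw [horder, ← horder, zpow_mod_orderOf]
    · intro hM
      rw [Finset.mem_coe, hV, Finset.mem_image] at hM
      obtain ⟨m, _, rfl⟩ := hM
      exact ⟨g ^ m, Subgroup.pow_mem _ (Subgroup.mem_zpowers g) m, rfl⟩
  have hFG : {M : Matrix (Fin n) (Fin n) ℝ | ∃ m ∈ Fx ∪ Fy ∪ Fz, M = (g ^ m).permMatrix ℝ}
      = (G : Set (Matrix (Fin n) (Fin n) ℝ)) := by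
    ext M
    constructor
    · rintro ⟨m, hm, rfl⟩
      have hmN : m < a*b*c := by
        rcases hm with (h | h) | h
        · exact ((hmemx m).1 h).1
        · exact ((hmemy m).1 h).1
        · exact ((hmemz m).1 h).1
      rw [Finset.mem_coe, hG, Finset.mem_filter]
      refine ⟨Finset.mem_image.2 ⟨m, Finset.mem_range.2 hmN, rfl⟩, ?_⟩
      rw [hval m]
      exact hkey1 m hm
    · intro hM
      rw [Finset.mem_coe, hG, Finset.mem_filter] at hM
      obtain ⟨hMV, hM1⟩ := hM
      obtain ⟨m, hm, rfl⟩ := Finset.mem_image.1 hMV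
      have hmN := Finset.mem_range.1 hm
      by_cases hmf : m ∈ Fx ∪ Fy ∪ Fz
      · exact ⟨m, hmf, rfl⟩
      · exfalso
        rw [hval m] at hM1
        have := hkey0 m hmN hmf
        linarith
  show IsExposed ℝ (convexHull ℝ _) _
  rw [hPV, hFG]
  apply exposed_of_finset V G l
  · intro v hv
    obtain ⟨m, hm, rfl⟩ := Finset.mem_image.1 hv
    have hmN := Finset.mem_range.1 hm
    by_cases hmf : m ∈ Fx ∪ Fy ∪ Fz
    · left; rw [hval m]; exact hkey1 m hmf
    · right; rw [hval m]; exact hkey0 m hmN hmf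
  · intro v
    rw [hG, Finset.mem_filter]
end

section
/- Let α, β, γ be types and let I, I' ⊆ α, J, J' ⊆ β, K, K' ⊆ γ all be nonempty proper subsets. If (I ×ˢ J ×ˢ K) ∪ (Iᶜ ×ˢ Jᶜ ×ˢ Kᶜ) = (I' ×ˢ J' ×ˢ K') ∪ (I'ᶜ ×ˢ J'ᶜ ×ˢ K'ᶜ) as subsets of α × β × γ, then either (I, J, K) = (I', J', K') or (I, J, K) = (I'ᶜ, J'ᶜ, K'ᶜ). In particular, for pairwise coprime a, b, c ≥ 2 the number of distinct 'checkerboard' sets (I ×ˢ J ×ˢ K) ∪ (Iᶜ ×ˢ Jᶜ ×ˢ Kᶜ) with I, J, K nonempty proper subsets of ZMod a, ZMod b, ZMod c respectively is (2^a − 2)(2^b − 2)(2^c − 2)/2. -/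
open Set

lemma my_mem_checker {α β γ : Type} {I : Set α} {J : Set β} {K : Set γ} {x : α} {y : β} {z : γ} :
    (x, y, z) ∈ (I ×ˢ (J ×ˢ K)) ∪ (Iᶜ ×ˢ (Jᶜ ×ˢ Kᶜ)) ↔
      (x ∈ I ∧ y ∈ J ∧ z ∈ K) ∨ (x ∉ I ∧ y ∉ J ∧ z ∉ K) := by
  simp [Set.mem_prod]

lemma my_checker_sub {α β γ : Type} {I I' : Set α} {J J' : Set β} {K K' : Set γ}
    {x0 : α} {y0 : β} {z0 : γ} (hx : x0 ∈ I) (hy : y0 ∈ J) (hz : z0 ∈ K)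
    (hx' : x0 ∈ I') (hy' : y0 ∈ J') (hz' : z0 ∈ K')
    (h : ∀ x y z, ((x ∈ I ∧ y ∈ J ∧ z ∈ K) ∨ (x ∉ I ∧ y ∉ J ∧ z ∉ K)) ↔
      ((x ∈ I' ∧ y ∈ J' ∧ z ∈ K') ∨ (x ∉ I' ∧ y ∉ J' ∧ z ∉ K'))) :
    I = I' ∧ J = J' ∧ K = K' := by
  refine ⟨Set.ext fun x => ?_, Set.ext fun y => ?_, Set.ext fun z => ?_⟩
  · have := h x y0 z0; tauto
  · have := h x0 y z0; tauto
  · have := h x0 y0 z; tauto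

lemma my_checker_classify {α β γ : Type} (I I' : Set α) (J J' : Set β) (K K' : Set γ)
    (hI : I.Nonempty) (hIu : I ≠ Set.univ) (hI' : I'.Nonempty) (hIu' : I' ≠ Set.univ)
    (hJ : J.Nonempty) (hJu : J ≠ Set.univ) (hJ' : J'.Nonempty) (hJu' : J' ≠ Set.univ)
    (hK : K.Nonempty) (hKu : K ≠ Set.univ) (hK' : K'.Nonempty) (hKu' : K' ≠ Set.univ)
    (h : (I ×ˢ (J ×ˢ K)) ∪ (Iᶜ ×ˢ (Jᶜ ×ˢ Kᶜ)) = (I' ×ˢ (J' ×ˢ K')) ∪ (I'ᶜ ×ˢ (J'ᶜ ×ˢ K'ᶜ))) :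
    (I = I' ∧ J = J' ∧ K = K') ∨ (I = I'ᶜ ∧ J = J'ᶜ ∧ K = K'ᶜ) := by
  obtain ⟨x0, hx0⟩ := hI
  obtain ⟨y0, hy0⟩ := hJ
  obtain ⟨z0, hz0⟩ := hK
  have hmem : ∀ x y z, ((x ∈ I ∧ y ∈ J ∧ z ∈ K) ∨ (x ∉ I ∧ y ∉ J ∧ z ∉ K)) ↔
      ((x ∈ I' ∧ y ∈ J' ∧ z ∈ K') ∨ (x ∉ I' ∧ y ∉ J' ∧ z ∉ K')) := by
    intro x y z
    rw [← my_mem_checker, ← my_mem_checker, h]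
  rcases (hmem x0 y0 z0).mp (Or.inl ⟨hx0, hy0, hz0⟩) with ⟨hx', hy', hz'⟩ | ⟨hx', hy', hz'⟩
  · exact Or.inl (my_checker_sub hx0 hy0 hz0 hx' hy' hz' hmem)
  · refine Or.inr (my_checker_sub hx0 hy0 hz0 hx' hy' hz' ?_)
    intro x y z
    rw [hmem x y z]
    simp only [Set.mem_compl_iff, not_not]
    tauto

lemma my_ncard_prod {α β : Type*} (s : Set α) (t : Set β) :
    (s ×ˢ t).ncard = s.ncard * t.ncard := by
  rw [← Nat.card_coe_set_eq, ← Nat.card_coe_set_eq, ← Nat.card_coe_set_eq,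
    Nat.card_congr (Equiv.Set.prod s t), Nat.card_prod]

-- card of nonempty proper subsets of a finite type
lemma my_card_nonempty_proper (X : Type) [Fintype X] [Nonempty X] :
    {J : Set X | J.Nonempty ∧ J ≠ Set.univ}.ncard = 2 ^ Fintype.card X - 2 := by
  have he : ({∅, Set.univ} : Set (Set X)) ⊆ Set.univ := Set.subset_univ _
  have hset : {J : Set X | J.Nonempty ∧ J ≠ Set.univ} =
      (Set.univ : Set (Set X)) \ {∅, Set.univ} := by
    ext J
    simp [Set.nonempty_iff_ne_empty, and_comm]
  rw [hset, Set.ncard_diff he, Set.ncard_univ,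
    Set.ncard_pair (by simpa using (Set.univ_nonempty (α := X)).ne_empty.symm : (∅ : Set X) ≠ Set.univ),
    Nat.card_eq_fintype_card, Fintype.card_set]

lemma my_card_zero_proper (X : Type) [Fintype X] (x : X) (h2 : 2 ≤ Fintype.card X) :
    2 * {I : Set X | x ∈ I ∧ I ≠ Set.univ}.ncard = 2 ^ Fintype.card X - 2 := by
  set A : Set (Set X) := {I : Set X | x ∈ I ∧ I ≠ Set.univ}
  set A' : Set (Set X) := {I : Set X | x ∉ I ∧ I.Nonempty}
  have himg : compl '' A = A' := by
    ext I
    constructor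
    · rintro ⟨I₀, ⟨hx, hu⟩, rfl⟩
      exact ⟨by simpa using hx, by
        rw [Set.nonempty_compl]; exact hu⟩
    · rintro ⟨hx, hne⟩
      exact ⟨Iᶜ, ⟨by simpa using hx, fun h => hne.ne_empty (by simpa using congrArg compl h)⟩, compl_compl I⟩
  have hcard : A'.ncard = A.ncard := by
    rw [← himg]
    exact Set.ncard_image_of_injOn (fun a _ b _ h => compl_injective h)
  have hunion : A ∪ A' = {J : Set X | J.Nonempty ∧ J ≠ Set.univ} := by
    ext I
    constructor
    · rintro (⟨hx, hu⟩ | ⟨hx, hne⟩)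
      · exact ⟨⟨x, hx⟩, hu⟩
      · exact ⟨hne, fun h => hx (h ▸ Set.mem_univ x)⟩
    · rintro ⟨hne, hu⟩
      by_cases hx : x ∈ I
      · exact Or.inl ⟨hx, hu⟩
      · exact Or.inr ⟨hx, hne⟩
  have hdisj : Disjoint A A' := by
    rw [Set.disjoint_left]
    rintro I ⟨hx, _⟩ ⟨hx', _⟩
    exact hx' hx
  have hN : Nonempty X := ⟨x⟩
  have := Set.ncard_union_eq hdisj (Set.toFinite A) (Set.toFinite A')
  rw [hunion, my_card_nonempty_proper X, hcard] at this
  omega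

/-- A checkerboard set `(I ×ˢ J ×ˢ K) ∪ (Iᶜ ×ˢ Jᶜ ×ˢ Kᶜ)` built from nonempty proper
subsets determines the triple `(I, J, K)` up to simultaneous complementation; in
particular, for pairwise coprime `a, b, c ≥ 2`, the number of distinct checkerboard subsets
of `ZMod a × ZMod b × ZMod c` is `(2^a - 2)(2^b - 2)(2^c - 2)/2`. -/
theorem checkerboard_sets_classification :
    (∀ {α β γ : Type} (I I' : Set α) (J J' : Set β) (K K' : Set γ),
      I.Nonempty → I ≠ Set.univ → I'.Nonempty → I' ≠ Set.univ →
      J.Nonempty → J ≠ Set.univ → J'.Nonempty → J' ≠ Set.univ →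
      K.Nonempty → K ≠ Set.univ → K'.Nonempty → K' ≠ Set.univ →
      (I ×ˢ (J ×ˢ K)) ∪ (Iᶜ ×ˢ (Jᶜ ×ˢ Kᶜ)) = (I' ×ˢ (J' ×ˢ K')) ∪ (I'ᶜ ×ˢ (J'ᶜ ×ˢ K'ᶜ)) →
      (I = I' ∧ J = J' ∧ K = K') ∨ (I = I'ᶜ ∧ J = J'ᶜ ∧ K = K'ᶜ)) ∧
    (∀ a b c : ℕ, 2 ≤ a → 2 ≤ b → 2 ≤ c →
      Nat.Coprime a b → Nat.Coprime a c → Nat.Coprime b c →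
      Set.ncard {S : Set (ZMod a × ZMod b × ZMod c) |
          ∃ (I : Set (ZMod a)) (J : Set (ZMod b)) (K : Set (ZMod c)),
            I.Nonempty ∧ I ≠ Set.univ ∧ J.Nonempty ∧ J ≠ Set.univ ∧
            K.Nonempty ∧ K ≠ Set.univ ∧
            S = (I ×ˢ (J ×ˢ K)) ∪ (Iᶜ ×ˢ (Jᶜ ×ˢ Kᶜ))}
        = (2 ^ a - 2) * (2 ^ b - 2) * (2 ^ c - 2) / 2) := by
  constructor
  · exact fun I I' J J' K K' => my_checker_classify I I' J J' K K'
  · intro a b c ha hb hc _ _ _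
    haveI : NeZero a := ⟨by omega⟩
    haveI : NeZero b := ⟨by omega⟩
    haveI : NeZero c := ⟨by omega⟩
    set A : Set (Set (ZMod a)) := {I | (0 : ZMod a) ∈ I ∧ I ≠ Set.univ} with hA_def
    set B : Set (Set (ZMod b)) := {J | J.Nonempty ∧ J ≠ Set.univ} with hB_def
    set C : Set (Set (ZMod c)) := {K | K.Nonempty ∧ K ≠ Set.univ} with hC_def
    set f : Set (ZMod a) × Set (ZMod b) × Set (ZMod c) → Set (ZMod a × ZMod b × ZMod c) :=
      fun p => (p.1 ×ˢ (p.2.1 ×ˢ p.2.2)) ∪ (p.1ᶜ ×ˢ (p.2.1ᶜ ×ˢ p.2.2ᶜ)) with hf_def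
    have hcompl : ∀ p : Set (ZMod a) × Set (ZMod b) × Set (ZMod c),
        f (p.1ᶜ, p.2.1ᶜ, p.2.2ᶜ) = f p := by
      intro p
      simp only [hf_def, compl_compl]
      exact Set.union_comm _ _
    have himg : {S : Set (ZMod a × ZMod b × ZMod c) |
          ∃ (I : Set (ZMod a)) (J : Set (ZMod b)) (K : Set (ZMod c)),
            I.Nonempty ∧ I ≠ Set.univ ∧ J.Nonempty ∧ J ≠ Set.univ ∧
            K.Nonempty ∧ K ≠ Set.univ ∧
            S = (I ×ˢ (J ×ˢ K)) ∪ (Iᶜ ×ˢ (Jᶜ ×ˢ Kᶜ))} = f '' (A ×ˢ (B ×ˢ C)) := by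
      ext S
      constructor
      · rintro ⟨I, J, K, hIne, hIu, hJne, hJu, hKne, hKu, rfl⟩
        by_cases h0 : (0 : ZMod a) ∈ I
        · exact ⟨(I, J, K), ⟨⟨h0, hIu⟩, ⟨hJne, hJu⟩, ⟨hKne, hKu⟩⟩, rfl⟩
        · refine ⟨(Iᶜ, Jᶜ, Kᶜ), ⟨⟨h0, ?_⟩, ⟨?_, ?_⟩, ⟨?_, ?_⟩⟩, ?_⟩
          · exact fun h => hIne.ne_empty (by simpa using congrArg compl h)
          · rwa [Set.nonempty_compl]
          · exact fun h => hJne.ne_empty (by simpa using congrArg compl h)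
          · rwa [Set.nonempty_compl]
          · exact fun h => hKne.ne_empty (by simpa using congrArg compl h)
          · exact (hcompl (I, J, K)).symm ▸ (hcompl (I, J, K))
      · rintro ⟨⟨I, J, K⟩, ⟨⟨h0, hIu⟩, ⟨hJne, hJu⟩, ⟨hKne, hKu⟩⟩, rfl⟩
        exact ⟨I, J, K, ⟨0, h0⟩, hIu, hJne, hJu, hKne, hKu, rfl⟩
    have hinj : Set.InjOn f (A ×ˢ (B ×ˢ C)) := by
      rintro ⟨I, J, K⟩ ⟨⟨h0, hIu⟩, ⟨hJne, hJu⟩, ⟨hKne, hKu⟩⟩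
        ⟨I', J', K'⟩ ⟨⟨h0', hIu'⟩, ⟨hJne', hJu'⟩, ⟨hKne', hKu'⟩⟩ heq
      rcases my_checker_classify I I' J J' K K' ⟨0, h0⟩ hIu ⟨0, h0'⟩ hIu'
        hJne hJu hJne' hJu' hKne hKu hKne' hKu' heq with ⟨h1, h2, h3⟩ | ⟨h1, _, _⟩
      · simp [Prod.ext_iff, h1, h2, h3]
      · exact absurd (h1 ▸ h0) (by simpa using h0')
    rw [himg, Set.ncard_image_of_injOn hinj, my_ncard_prod, my_ncard_prod]
    have hBc : B.ncard = 2 ^ b - 2 := by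
      rw [hB_def, my_card_nonempty_proper (ZMod b), ZMod.card]
    have hCc : C.ncard = 2 ^ c - 2 := by
      rw [hC_def, my_card_nonempty_proper (ZMod c), ZMod.card]
    have hAc : 2 * A.ncard = 2 ^ a - 2 := by
      rw [hA_def, my_card_zero_proper (ZMod a) 0 (by rw [ZMod.card]; exact ha), ZMod.card]
    rw [hBc, hCc, ← hAc]
    have : 2 * A.ncard * (2 ^ b - 2) * (2 ^ c - 2) =
        2 * (A.ncard * ((2 ^ b - 2) * (2 ^ c - 2))) := by ring
    rw [this, Nat.mul_div_cancel_left _ two_pos]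
end
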